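/- A matroid M on a finite ground set is a strict gammoid if and only if its dual matroid M* is a transversal matroid. -/

import Mathlib

/-- `Linked Adj B X` : `X` can be linked into `B` in the directed graph with adjacency `Adj`
by pairwise vertex-disjoint directed paths. -/
def Linked {V : Type*} (Adj : V → V → Prop) (B : Set V) (X : Set V) : Prop :=
  ∃ P : X → List V,
    (∀ x : X, (P x).Chain' Adj ∧ (P x).Nodup ∧ (P x).head? = some x.1 ∧
      ∃ y ∈ B, (P x).getLast? = some y) ∧
    ∀ x x' : X, x ≠ x' → ∀ v ∈ P x, v ∉ P x'

/-- `X` is a partial transversal of the family `A : J → Set S`. -/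
def PartialTransversal {S J : Type*} (A : J → Set S) (X : Set S) : Prop :=
  ∃ f : S → J, Set.InjOn f X ∧ ∀ x ∈ X, x ∈ A (f x)

/-- A matroid (on its whole ground type) is a strict gammoid if its independent sets are exactly
the vertex subsets of some directed graph linkable into a fixed vertex set `B` by
vertex-disjoint directed paths. -/
def IsStrictGammoid {E : Type*} (M : Matroid E) : Prop :=
  ∃ (Adj : E → E → Prop) (B : Set E), ∀ X : Set E, M.Indep X ↔ Linked Adj B X

/-- A matroid is transversal if its independent sets are exactly the partial transversals of
some finite family of subsets of the ground set. -/
def IsTransversalMatroid {E : Type*} (M : Matroid E) : Prop :=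
  ∃ (n : ℕ) (A : Fin n → Set E), ∀ X : Set E, M.Indep X ↔ PartialTransversal A X



open Classical Set

lemma linked_to_fun {E : Type*} [Fintype E] {Adj : E → E → Prop} {B X : Set E}
    (h : Linked Adj B X) :
    ∃ f : E → E, Set.InjOn f Bᶜ ∧
      (∀ v ∈ Bᶜ, f v = v ∨ Adj v (f v)) ∧ (∀ v ∈ Bᶜ, f v ∉ X) := by
  classical
  obtain ⟨P, hP, hdisj⟩ := h
  -- each x lies on its own path
  have hmemX : ∀ x : X, (x : E) ∈ P x := by
    intro x
    exact List.mem_of_mem_head? (by rw [(hP x).2.2.1]; simp)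
  have huniq : ∀ (v : E) (x x' : X), v ∈ P x → v ∈ P x' → x = x' := by
    intro v x x' h1 h2
    by_contra hne
    exact hdisj x x' hne v h1 h2
  set f : E → E := fun v =>
    if hv : ∃ x : X, v ∈ P x then (P hv.choose).getD ((P hv.choose).idxOf v + 1) v
    else v with hf
  -- main structural fact for on-path vertices outside B
  have hsucc : ∀ v ∈ Bᶜ, ∀ (x : X), v ∈ P x →
      ∃ h1 : (P x).idxOf v + 1 < (P x).length,
        f v = (P x).get ⟨(P x).idxOf v + 1, h1⟩ := by
    intro v hv x hvx
    have hvex : ∃ x : X, v ∈ P x := ⟨x, hvx⟩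
    have hxeq : hvex.choose = x := huniq v _ x hvex.choose_spec hvx
    have hi : (P x).idxOf v < (P x).length := List.idxOf_lt_length_iff.2 hvx
    have hlast : ∃ y ∈ B, (P x).getLast? = some y := (hP x).2.2.2
    have hne : P x ≠ [] := by
      intro h0; rw [h0] at hvx; simp at hvx
    have h1 : (P x).idxOf v + 1 < (P x).length := by
      by_contra hcon
      have : (P x).idxOf v = (P x).length - 1 := by omega
      obtain ⟨y, hyB, hy⟩ := hlast
      have hgl : (P x).getLast hne = y := by
        rw [List.getLast?_eq_getLast_of_ne_nil hne] at hy
        exact Option.some_injective _ hy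
      have hv' : (P x)[(P x).idxOf v]'hi = v := List.getElem_idxOf hi
      have h2 : (P x)[(P x).length - 1]'(by omega) = (P x)[(P x).idxOf v]'hi := by
        congr 1; omega
      have hy2 : y = (P x)[(P x).length - 1]'(by omega) := by
        rw [← hgl, List.getLast_eq_getElem]
      have : v = y := by rw [hy2, h2, hv']
      exact hv (this ▸ hyB)
    refine ⟨h1, ?_⟩
    rw [hf]
    simp only [dif_pos hvex, hxeq]
    exact List.getD_eq_get _ _ ⟨_, h1⟩
  refine ⟨f, ?_, ?_, ?_⟩
  · -- InjOn
    intro v hv v' hv' heq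
    by_cases h1 : ∃ x : X, v ∈ P x
    · obtain ⟨x, hx⟩ := h1
      obtain ⟨hlt, hgv⟩ := hsucc v hv x hx
      by_cases h2 : ∃ x' : X, v' ∈ P x'
      · obtain ⟨x', hx'⟩ := h2
        obtain ⟨hlt', hgv'⟩ := hsucc v' hv' x' hx'
        have hfv : f v ∈ P x := by rw [hgv]; exact List.get_mem _ _
        have hfv' : f v' ∈ P x' := by rw [hgv']; exact List.get_mem _ _
        have hxx : x = x' := huniq (f v) x x' hfv (heq ▸ hfv')
        subst hxx
        have := ((hP x).2.1.get_inj_iff).1 ((hgv.symm.trans heq).trans hgv')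
        have hij : (P x).idxOf v = (P x).idxOf v' := by
          simpa using congrArg Fin.val this
        have e1 : (P x).get ⟨(P x).idxOf v, by omega⟩ = v := List.idxOf_get _
        have e2 : (P x).get ⟨(P x).idxOf v', by omega⟩ = v' := List.idxOf_get _
        have e3 : (P x).get ⟨(P x).idxOf v, by omega⟩ = (P x).get ⟨(P x).idxOf v', by omega⟩ := by
          congr 1
          exact Fin.ext hij
        exact (e1.symm.trans e3).trans e2
      · -- v' off path : f v' = v'
        have hfv' : f v' = v' := by rw [hf]; simp only [dif_neg h2]
        have hfv : f v ∈ P x := by rw [hgv]; exact List.get_mem _ _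
        rw [heq, hfv'] at hfv
        exact absurd ⟨x, hfv⟩ h2
    · have hfv : f v = v := by rw [hf]; simp only [dif_neg h1]
      by_cases h2 : ∃ x' : X, v' ∈ P x'
      · obtain ⟨x', hx'⟩ := h2
        obtain ⟨hlt', hgv'⟩ := hsucc v' hv' x' hx'
        have hfv' : f v' ∈ P x' := by rw [hgv']; exact List.get_mem _ _
        rw [← heq, hfv] at hfv'
        exact absurd ⟨x', hfv'⟩ h1
      · have hfv' : f v' = v' := by rw [hf]; simp only [dif_neg h2]
        rw [hfv, hfv'] at heq; exact heq
  · -- step property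
    intro v hv
    by_cases h1 : ∃ x : X, v ∈ P x
    · obtain ⟨x, hx⟩ := h1
      obtain ⟨hlt, hgv⟩ := hsucc v hv x hx
      right
      have hchain := (hP x).1
      change List.IsChain Adj (P x) at hchain
      rw [List.isChain_iff_getElem] at hchain
      have := hchain ((P x).idxOf v) (by omega)
      have e1 : (P x).get ⟨(P x).idxOf v, by omega⟩ = v := List.idxOf_get _
      rw [hgv]
      simp only [List.get_eq_getElem] at e1 ⊢
      rw [e1] at this
      convert this using 2
    · left; rw [hf]; simp only [dif_neg h1]
  · -- avoids X
    intro v hv hvX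
    by_cases h1 : ∃ x : X, v ∈ P x
    · obtain ⟨x, hx⟩ := h1
      obtain ⟨hlt, hgv⟩ := hsucc v hv x hx
      set x' : X := ⟨f v, hvX⟩ with hx'def
      have hfv' : f v ∈ P x' := hmemX x'
      have hfv : f v ∈ P x := by rw [hgv]; exact List.get_mem _ _
      have hxx : x' = x := huniq (f v) x' x hfv' hfv
      -- head of P x is x, and f v = x as well; but f v is at index > 0
      have hhead : (P x).head? = some (x : E) := (hP x).2.2.1
      have hne : P x ≠ [] := by
        intro h0; rw [h0] at hfv; simp at hfv
      have hlen : 0 < (P x).length := List.length_pos_iff.2 hne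
      have hget0 : (P x)[0]'hlen = (x : E) := by
        have := hhead
        rw [List.head?_eq_getElem?, List.getElem?_eq_getElem hlen] at this
        exact Option.some_injective _ this
      have hfvx : f v = (x : E) := by
        have : (↑x' : E) = f v := rfl
        rw [← this, hxx]
      have hget1 : (P x).get ⟨(P x).idxOf v + 1, hlt⟩ = (P x).get ⟨0, hlen⟩ := by
        simp only [List.get_eq_getElem]
        rw [hget0, ← hfvx, hgv]
        simp
      have := ((hP x).2.1.get_inj_iff).1 hget1
      simpa using congrArg Fin.val this
    · have hfv : f v = v := by rw [hf]; simp only [dif_neg h1]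
      rw [hfv] at hvX
      exact h1 ⟨⟨v, hvX⟩, hmemX _⟩

lemma fun_to_linked {E : Type*} [Fintype E] {Adj : E → E → Prop} {B X : Set E}
    (f : E → E) (hinj : Set.InjOn f Bᶜ)
    (hstep : ∀ v ∈ Bᶜ, f v = v ∨ Adj v (f v)) (havoid : ∀ v ∈ Bᶜ, f v ∉ X) :
    Linked Adj B X := by
  classical
  set g : E → E := fun v => if v ∈ Bᶜ then f v else v with hg
  have hgB : ∀ v ∈ Bᶜ, g v = f v := by intro v hv; simp only [hg]; rw [if_pos hv]
  -- distinctness of trajectories before hitting B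
  have dist : ∀ (x : E), x ∈ X → ∀ j, (∀ t, t < j → g^[t] x ∉ B) →
      ∀ i, i < j → g^[i] x ≠ g^[j] x := by
    intro x hx j
    induction j using Nat.strong_induction_on with
    | _ j IH =>
      intro hnb i hij heq
      obtain ⟨j', rfl⟩ : ∃ j', j = j' + 1 := ⟨j - 1, by omega⟩
      have hj' : g^[j'] x ∈ Bᶜ := hnb j' (by omega)
      have hsj : g^[j' + 1] x = f (g^[j'] x) := by
        rw [Function.iterate_succ_apply', hgB _ hj']
      rcases Nat.eq_zero_or_pos i with rfl | hi
      · rw [Function.iterate_zero_apply] at heq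
        rw [hsj] at heq
        exact havoid _ hj' (heq ▸ hx)
      · obtain ⟨i', rfl⟩ : ∃ i', i = i' + 1 := ⟨i - 1, by omega⟩
        have hi' : g^[i'] x ∈ Bᶜ := hnb i' (by omega)
        have hsi : g^[i' + 1] x = f (g^[i'] x) := by
          rw [Function.iterate_succ_apply', hgB _ hi']
        rw [hsi, hsj] at heq
        have := hinj hi' hj' heq
        exact IH j' (by omega) (fun t ht => hnb t (by omega)) i' (by omega) this
  -- trajectories hit B
  have hit : ∀ (x : E), x ∈ X → ∃ k, g^[k] x ∈ B := by
    intro x hx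
    by_contra hcon
    push_neg at hcon
    have hinj2 : Function.Injective (fun i : Fin (Fintype.card E + 1) => g^[i.1] x) := by
      intro i j hij
      rcases lt_trichotomy i.1 j.1 with h | h | h
      · exact absurd hij (dist x hx j.1 (fun t _ => hcon t) i.1 h)
      · exact Fin.ext h
      · exact absurd hij.symm (dist x hx i.1 (fun t _ => hcon t) j.1 h)
    have := Fintype.card_le_of_injective _ hinj2
    simp at this
  -- define paths
  refine ⟨fun x => (List.range (Nat.find (hit x.1 x.2) + 1)).map (fun k => g^[k] x.1),
    ?_, ?_⟩
  · intro x
    set m := Nat.find (hit x.1 x.2) with hm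
    have hmB : g^[m] x.1 ∈ B := Nat.find_spec (hit x.1 x.2)
    have hmlt : ∀ k, k < m → g^[k] x.1 ∉ B := fun k hk => Nat.find_min (hit x.1 x.2) hk
    set l := (List.range (m + 1)).map (fun k => g^[k] x.1) with hl
    have hlen : l.length = m + 1 := by simp [hl]
    have hget : ∀ i (h : i < l.length), l[i] = g^[i] x.1 := by
      intro i h
      simp only [hl, List.getElem_map, List.getElem_range]
    have hne : l ≠ [] := by
      intro h0
      rw [h0] at hlen; simp at hlen
    show l.Chain' Adj ∧ l.Nodup ∧ l.head? = some x.1 ∧ ∃ y ∈ B, l.getLast? = some y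
    refine ⟨?_, ?_, ?_, ⟨g^[m] x.1, hmB, ?_⟩⟩
    · change List.IsChain Adj l
      rw [List.isChain_iff_getElem]
      intro i hi
      rw [hlen] at hi
      have h1 : i < l.length := by omega
      have h2 : i + 1 < l.length := by omega
      simp only [List.get_eq_getElem, hget _ h1, hget _ h2]
      have hiB : g^[i] x.1 ∈ Bᶜ := hmlt i (by omega)
      have hsi : g^[i + 1] x.1 = f (g^[i] x.1) := by
        rw [Function.iterate_succ_apply', hgB _ hiB]
      rcases hstep _ hiB with h | h
      · exfalso
        refine dist x.1 x.2 (i+1) (fun t ht => hmlt t (by omega)) i (by omega) ?_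
        rw [hsi, h]
      · rw [hsi]; exact h
    · rw [hl]
      refine List.Nodup.map_on ?_ List.nodup_range
      intro k hk k' hk' hkk
      simp only [List.mem_range] at hk hk'
      by_contra hne2
      rcases lt_or_gt_of_ne hne2 with h | h
      · exact dist x.1 x.2 k' (fun t ht => hmlt t (by omega)) k h hkk
      · exact dist x.1 x.2 k (fun t ht => hmlt t (by omega)) k' h hkk.symm
    · rw [List.head?_eq_getElem?, List.getElem?_eq_getElem (by rw [hlen]; omega)]
      rw [hget 0 (by rw [hlen]; omega)]
      simp
    · rw [List.getLast?_eq_getLast_of_ne_nil hne, List.getLast_eq_getElem]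
      congr 1
      rw [hget _ (by omega)]
      congr 1
      omega
  · -- disjointness
    intro x x' hne v hv hv'
    simp only [List.mem_map, List.mem_range] at hv hv'
    obtain ⟨k, hk, hkv⟩ := hv
    obtain ⟨k', hk', hkv'⟩ := hv'
    have hmlt : ∀ (x : X) k, k < Nat.find (hit x.1 x.2) → g^[k] x.1 ∉ B :=
      fun x k hk => Nat.find_min (hit x.1 x.2) hk
    have key : ∀ n (k k' : ℕ), k + k' ≤ n → k ≤ Nat.find (hit x.1 x.2) →
        k' ≤ Nat.find (hit x'.1 x'.2) → g^[k] x.1 ≠ g^[k'] x'.1 := by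
      intro n
      induction n with
      | zero =>
        intro k k' hn _ _
        obtain ⟨rfl, rfl⟩ : k = 0 ∧ k' = 0 := by omega
        simp only [Function.iterate_zero_apply]
        intro h
        exact hne (Subtype.ext h)
      | succ n IH =>
        intro k k' hn hk hk' heq
        rcases Nat.eq_zero_or_pos k with rfl | hkpos
        · rcases Nat.eq_zero_or_pos k' with rfl | hk'pos
          · simp only [Function.iterate_zero_apply] at heq
            exact hne (Subtype.ext heq)
          · obtain ⟨j, rfl⟩ : ∃ j, k' = j + 1 := ⟨k' - 1, by omega⟩
            have hjB : g^[j] x'.1 ∈ Bᶜ := hmlt x' j (by omega)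
            rw [Function.iterate_zero_apply] at heq
            rw [Function.iterate_succ_apply', hgB _ hjB] at heq
            exact havoid _ hjB (heq ▸ x.2)
        · obtain ⟨i, rfl⟩ : ∃ i, k = i + 1 := ⟨k - 1, by omega⟩
          have hiB : g^[i] x.1 ∈ Bᶜ := hmlt x i (by omega)
          rcases Nat.eq_zero_or_pos k' with rfl | hk'pos
          · rw [Function.iterate_zero_apply] at heq
            rw [Function.iterate_succ_apply', hgB _ hiB] at heq
            exact havoid _ hiB (heq.symm ▸ x'.2)
          · obtain ⟨j, rfl⟩ : ∃ j, k' = j + 1 := ⟨k' - 1, by omega⟩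
            have hjB : g^[j] x'.1 ∈ Bᶜ := hmlt x' j (by omega)
            rw [Function.iterate_succ_apply', hgB _ hiB,
              Function.iterate_succ_apply', hgB _ hjB] at heq
            exact IH i j (by omega) (by omega) (by omega) (hinj hiB hjB heq)
    exact key (k + k') k k' le_rfl (by omega) (by omega) (hkv.trans hkv'.symm)

lemma ext_full {E : Type*} {Adj : E → E → Prop} {Bc Y : Set E} (gE : E → E)
    (hg : ∀ y ∈ Y, gE y ∈ Bc ∧ (y = gE y ∨ Adj (gE y) y))
    (hinj : Set.InjOn gE Y) :
    ∃ f : E → E, Set.InjOn f Bc ∧ (∀ v ∈ Bc, f v = v ∨ Adj v (f v)) ∧ Y ⊆ f '' Bc := by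
  classical
  set step : E → E → Prop := fun a b => a ∈ Y ∧ b = gE a with hstepdef
  set R : Set E := {v | ∃ v0, (v0 ∈ Bc ∧ v0 ∉ gE '' Y) ∧ Relation.ReflTransGen step v0 v}
    with hR
  have hRBc : R ⊆ Bc := by
    rintro v ⟨v0, ⟨h0, _⟩, hrt⟩
    induction hrt with
    | refl => exact h0
    | tail _ hs ih => exact hs.2 ▸ (hg _ hs.1).1
  have hRstep : ∀ v ∈ R, v ∈ Y → gE v ∈ R := by
    rintro v ⟨v0, h0, hrt⟩ hvY
    exact ⟨v0, h0, hrt.tail ⟨hvY, rfl⟩⟩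
  have hRinv : ∀ y ∈ Y, gE y ∈ R → y ∈ R := by
    rintro y hy ⟨v0, h0, hrt⟩
    rcases Relation.ReflTransGen.cases_tail hrt with heq | ⟨c, hc, hs⟩
    · exact absurd (heq ▸ ⟨y, hy, rfl⟩) h0.2
    · have : c = y := hinj hs.1 hy (hs.2.symm)
      exact ⟨v0, h0, this ▸ hc⟩
  have hcov : ∀ v ∈ Bc, v ∉ R → ∃ y ∈ Y, gE y = v := by
    intro v hv hvR
    by_contra hcon
    push_neg at hcon
    exact hvR ⟨v, ⟨hv, fun ⟨y, hy, hgy⟩ => hcon y hy hgy⟩, Relation.ReflTransGen.refl⟩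
  set f : E → E := fun v => if h : v ∈ Bc ∧ v ∉ R then (hcov v h.1 h.2).choose else v
    with hf
  have hfR : ∀ v ∈ R, f v = v := by
    intro v hv
    have hnot : ¬ (v ∈ Bc ∧ v ∉ R) := fun h => h.2 hv
    simp only [hf, dif_neg hnot]
  have hfnR : ∀ v ∈ Bc, v ∉ R → f v ∈ Y ∧ gE (f v) = v := by
    intro v hv hvR
    have h : v ∈ Bc ∧ v ∉ R := ⟨hv, hvR⟩
    rw [hf]
    simp only [dif_pos h]
    exact ⟨(hcov v h.1 h.2).choose_spec.1, (hcov v h.1 h.2).choose_spec.2⟩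
  refine ⟨f, ?_, ?_, ?_⟩
  · intro v hv v' hv' heq
    by_cases h1 : v ∈ R <;> by_cases h2 : v' ∈ R
    · rw [hfR v h1, hfR v' h2] at heq; exact heq
    · obtain ⟨hy', hgy'⟩ := hfnR v' hv' h2
      rw [hfR v h1] at heq
      exfalso
      have : v ∈ Y := heq ▸ hy'
      have : gE v ∈ R := hRstep v h1 this
      rw [heq, hgy'] at this
      exact h2 this
    · obtain ⟨hy, hgy⟩ := hfnR v hv h1
      rw [hfR v' h2] at heq
      exfalso
      have : v' ∈ Y := heq ▸ hy
      have : gE v' ∈ R := hRstep v' h2 this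
      rw [← heq, hgy] at this
      exact h1 this
    · obtain ⟨hy, hgy⟩ := hfnR v hv h1
      obtain ⟨hy', hgy'⟩ := hfnR v' hv' h2
      rw [← hgy, ← hgy', heq]
  · intro v hv
    by_cases h1 : v ∈ R
    · left; exact hfR v h1
    · obtain ⟨hy, hgy⟩ := hfnR v hv h1
      rcases (hg _ hy).2 with h | h
      · left; exact h.trans hgy
      · right; rw [hgy] at h; exact h
  · intro y hy
    by_cases h1 : gE y ∈ R
    · have hyR : y ∈ R := hRinv y hy h1
      exact ⟨y, hRBc hyR, hfR y hyR⟩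
    · have hgBc : gE y ∈ Bc := (hg _ hy).1
      obtain ⟨hy', hgy'⟩ := hfnR (gE y) hgBc h1
      have : f (gE y) = y := hinj hy' hy hgy'
      exact ⟨gE y, hgBc, this⟩


lemma reroute {E : Type*} [Fintype E] {n : ℕ} (A : Fin n → Set E) (N : Matroid E)
    (hN : ∀ Z : Set E, N.Indep Z ↔ PartialTransversal A Z)
    {W0 : Set E} (hW0 : N.IsBase W0) (F0 : E → Fin n)
    (hF0i : Set.InjOn F0 W0) (hF0m : ∀ w ∈ W0, w ∈ A (F0 w))
    {W : Set E} (F : E → Fin n) (hFi : Set.InjOn F W) (hFm : ∀ w ∈ W, w ∈ A (F w)) :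
    ∃ F' : E → Fin n, Set.InjOn F' W ∧ (∀ w ∈ W, w ∈ A (F' w)) ∧ F' '' W ⊆ F0 '' W0 := by
  classical
  set J0 := F0 '' W0 with hJ0
  suffices h : ∀ (k : ℕ) (F : E → Fin n), Set.InjOn F W → (∀ w ∈ W, w ∈ A (F w)) →
      (F '' W \ J0).ncard ≤ k →
      ∃ F' : E → Fin n, Set.InjOn F' W ∧ (∀ w ∈ W, w ∈ A (F' w)) ∧ F' '' W ⊆ J0 by
    exact h _ F hFi hFm le_rfl
  intro k
  induction k with
  | zero =>
    intro F hFi hFm hcard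
    refine ⟨F, hFi, hFm, ?_⟩
    have : (F '' W \ J0) = ∅ := by
      rw [← Set.ncard_eq_zero (Set.toFinite _)]
      omega
    rw [Set.diff_eq_empty] at this
    exact this
  | succ k IH =>
    intro F hFi hFm hcard
    by_cases hsub : F '' W ⊆ J0
    · exact ⟨F, hFi, hFm, hsub⟩
    · -- pick an offending index l = F z0
      have hex : ∃ l, l ∈ F '' W \ J0 := by
        rw [← Set.nonempty_def, Set.diff_nonempty]
        exact hsub
      obtain ⟨l, hlW, hlJ0⟩ := hex
      obtain ⟨z0, hz0W, hz0⟩ := hlW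
      -- the chain map
      set τ : E → E := fun z => if h : ∃ z', z' ∈ W ∧ F z' = F0 z then h.choose else z
        with hτ
      set s : ℕ → E := fun j => τ^[j] z0 with hs
      set good : ℕ → Prop :=
        fun j => ∀ i < j, s i ∈ W0 ∧ ∃ z', z' ∈ W ∧ F z' = F0 (s i) with hgood
      have hmono : ∀ {j j'}, j' ≤ j → good j → good j' :=
        fun h hg i hi => hg i (by omega)
      have hsW : ∀ j, good j → s j ∈ W := by
        intro j
        induction j with
        | zero => intro _; exact hz0W
        | succ j ihj =>
          intro hgj
          have hdom := (hgj j (by omega)).2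
          have : s (j+1) = τ (s j) := by rw [hs]; exact Function.iterate_succ_apply' τ j z0
          rw [this, hτ]
          simp only [dif_pos hdom]
          exact hdom.choose_spec.1
      have hchainEq : ∀ j, good (j+1) → F (s (j+1)) = F0 (s j) := by
        intro j hgj
        have hdom := (hgj j (by omega)).2
        have : s (j+1) = τ (s j) := by rw [hs]; exact Function.iterate_succ_apply' τ j z0
        rw [this, hτ]
        simp only [dif_pos hdom]
        exact hdom.choose_spec.2
      have hdist : ∀ j, good j → ∀ i < j, s i ≠ s j := by
        intro j
        induction j using Nat.strong_induction_on with
        | _ j IHj =>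
          intro hgj i hij heq
          obtain ⟨j', rfl⟩ : ∃ j', j = j' + 1 := ⟨j - 1, by omega⟩
          have hFj : F (s (j'+1)) = F0 (s j') := hchainEq j' hgj
          rcases Nat.eq_zero_or_pos i with rfl | hi
          · have hz0s : s 0 = z0 := by rw [hs]; rfl
            have : l = F0 (s j') := by rw [← hz0, ← hFj, ← heq, hz0s]
            exact hlJ0 (this ▸ ⟨s j', (hgj j' (by omega)).1, rfl⟩)
          · obtain ⟨i', rfl⟩ : ∃ i', i = i' + 1 := ⟨i - 1, by omega⟩
            have hFi' : F (s (i'+1)) = F0 (s i') := hchainEq i' (hmono (by omega) hgj)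
            have : F0 (s i') = F0 (s j') := by rw [← hFi', ← hFj, heq]
            have := hF0i (hgj i' (by omega)).1 (hgj j' (by omega)).1 this
            exact IHj j' (by omega) (hmono (by omega) hgj) i' (by omega) this
      -- there is a first failure
      have hfail : ∃ K, ¬ good (K + 1) := by
        by_contra hcon
        push_neg at hcon
        have hall : ∀ j, good j := by
          intro j
          induction j with
          | zero => intro i hi; omega
          | succ j ihj => exact hcon j
        have hinj2 : Function.Injective
            (fun i : Fin (Fintype.card E + 1) => s i.1) := by
          intro i j hij
          rcases lt_trichotomy i.1 j.1 with h | h | h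
          · exact absurd hij (hdist j.1 (hall j.1) i.1 h)
          · exact Fin.ext h
          · exact absurd hij.symm (hdist i.1 (hall i.1) j.1 h)
        have := Fintype.card_le_of_injective _ hinj2
        simp at this
      set K := Nat.find hfail with hK
      have hKfail : ¬ good (K + 1) := Nat.find_spec hfail
      have hKgood : good K := by
        rcases Nat.eq_zero_or_pos K with h0 | hpos
        · rw [h0]; intro i hi; omega
        · have := Nat.find_min hfail (m := K - 1) (by omega)
          rw [not_not] at this
          have hKK : K - 1 + 1 = K := by omega
          rwa [hKK] at this
      have hKbad : ¬ (s K ∈ W0 ∧ ∃ z', z' ∈ W ∧ F z' = F0 (s K)) := by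
        intro hP
        refine hKfail (fun i hi => ?_)
        rcases Nat.lt_or_ge i K with h | h
        · exact hKgood i h
        · have : i = K := by omega
          exact this ▸ hP
      set C : Set E := s '' {i | i ≤ K} with hC
      have hCW : C ⊆ W := by
        rintro _ ⟨i, hi, rfl⟩
        exact hsW i (hmono hi hKgood)
      have hCW0 : ∀ i < K, s i ∈ W0 := fun i hi => (hKgood i hi).1
      have hz0C : z0 ∈ C := ⟨0, by simp, by rw [hs]; rfl⟩
      have hsKC : s K ∈ C := ⟨K, by simp, rfl⟩
      by_cases hKW0 : s K ∈ W0
      · -- Case 2 : reroute indices of the chain to F0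
        have hKnoz : ¬ ∃ z', z' ∈ W ∧ F z' = F0 (s K) := fun h => hKbad ⟨hKW0, h⟩
        set F' : E → Fin n := fun z => if z ∈ C then F0 z else F z with hF'
        have hF'C : ∀ z ∈ C, F' z = F0 z := by
          intro z hz; simp only [hF', if_pos hz]
        have hF'nC : ∀ z, z ∉ C → F' z = F z := by
          intro z hz; simp only [hF', if_neg hz]
        have hCW0' : C ⊆ W0 := by
          rintro _ ⟨i, hi, rfl⟩
          simp only [Set.mem_setOf_eq] at hi
          rcases Nat.lt_or_ge i K with h | h
          · exact hCW0 i h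
          · have : i = K := by omega
            exact this ▸ hKW0
        have hmem' : ∀ w ∈ W, w ∈ A (F' w) := by
          intro w hw
          by_cases hc : w ∈ C
          · rw [hF'C w hc]; exact hF0m w (hCW0' hc)
          · rw [hF'nC w hc]; exact hFm w hw
        have hinj' : Set.InjOn F' W := by
          intro a ha b hb heq
          by_cases hca : a ∈ C <;> by_cases hcb : b ∈ C
          · rw [hF'C a hca, hF'C b hcb] at heq
            exact hF0i (hCW0' hca) (hCW0' hcb) heq
          · rw [hF'C a hca, hF'nC b hcb] at heq
            exfalso
            obtain ⟨i, hi, rfl⟩ := hca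
            simp only [Set.mem_setOf_eq] at hi
            rcases Nat.lt_or_ge i K with h | h
            · have : F (s (i+1)) = F0 (s i) := hchainEq i (hmono (by omega) hKgood)
              have hbs : b = s (i+1) := hFi hb (hCW (⟨i+1, by simp only [Set.mem_setOf_eq]; omega, rfl⟩)) (by rw [this, heq])
              exact hcb (hbs ▸ ⟨i+1, by simp only [Set.mem_setOf_eq]; omega, rfl⟩)
            · have : i = K := by omega
              subst this
              exact hKnoz ⟨b, hb, heq.symm⟩
          · rw [hF'nC a hca, hF'C b hcb] at heq
            exfalso
            obtain ⟨i, hi, rfl⟩ := hcb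
            simp only [Set.mem_setOf_eq] at hi
            rcases Nat.lt_or_ge i K with h | h
            · have : F (s (i+1)) = F0 (s i) := hchainEq i (hmono (by omega) hKgood)
              have has : a = s (i+1) := hFi ha (hCW (⟨i+1, by simp only [Set.mem_setOf_eq]; omega, rfl⟩)) (by rw [this, ← heq])
              exact hca (has ▸ ⟨i+1, by simp only [Set.mem_setOf_eq]; omega, rfl⟩)
            · have : i = K := by omega
              subst this
              exact hKnoz ⟨a, ha, heq⟩
          · rw [hF'nC a hca, hF'nC b hcb] at heq
            exact hFi ha hb heq
        -- the new set of used indices is strictly smaller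
        have hss : F' '' W \ J0 ⊂ F '' W \ J0 := by
          constructor
          · rintro j ⟨⟨z, hz, rfl⟩, hj⟩
            by_cases hc : z ∈ C
            · exact absurd (hF'C z hc ▸ ⟨z, hCW0' hc, rfl⟩) hj
            · rw [hF'nC z hc]
              exact ⟨⟨z, hz, (hF'nC z hc).symm ▸ rfl⟩, by rwa [hF'nC z hc] at hj⟩
          · intro hsub2
            have hlin : l ∈ F '' W \ J0 := ⟨⟨z0, hz0W, hz0⟩, hlJ0⟩
            have := hsub2 hlin
            obtain ⟨⟨z, hz, hzl⟩, _⟩ := this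
            by_cases hc : z ∈ C
            · rw [hF'C z hc] at hzl
              exact hlJ0 (hzl ▸ ⟨z, hCW0' hc, rfl⟩)
            · rw [hF'nC z hc] at hzl
              have : z = z0 := hFi hz hz0W (by rw [hzl, hz0])
              exact hc (this ▸ hz0C)
        have hcard' : (F' '' W \ J0).ncard ≤ k := by
          have := Set.ncard_lt_ncard hss (Set.toFinite _)
          omega
        exact IH F' hinj' hmem' hcard'
      · -- Case 1 : contradiction with maximality of W0
        exfalso
        set G : E → Fin n := fun z => if z ∈ C then F z else F0 z with hG
        have hGC : ∀ z ∈ C, G z = F z := by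
          intro z hz; simp only [hG, if_pos hz]
        have hGnC : ∀ z, z ∉ C → G z = F0 z := by
          intro z hz; simp only [hG, if_neg hz]
        have hindep : N.Indep (insert (s K) W0) := by
          rw [hN]
          refine ⟨G, ?_, ?_⟩
          · intro a ha b hb heq
            by_cases hca : a ∈ C <;> by_cases hcb : b ∈ C
            · rw [hGC a hca, hGC b hcb] at heq
              exact hFi (hCW hca) (hCW hcb) heq
            · rw [hGC a hca, hGnC b hcb] at heq
              exfalso
              have hbW0 : b ∈ W0 := by
                rcases hb with rfl | hb
                · exact absurd hsKC hcb
                · exact hb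
              obtain ⟨i, hi, rfl⟩ := hca
              simp only [Set.mem_setOf_eq] at hi
              rcases Nat.eq_zero_or_pos i with rfl | hipos
              · have hz0s : s 0 = z0 := by rw [hs]; rfl
                refine hlJ0 ⟨b, hbW0, ?_⟩
                rw [← heq, hz0s, hz0]
              · obtain ⟨i', rfl⟩ : ∃ i', i = i' + 1 := ⟨i - 1, by omega⟩
                have hch : F (s (i'+1)) = F0 (s i') := hchainEq i' (hmono (by omega) hKgood)
                have : F0 b = F0 (s i') := by rw [← heq, hch]
                have hbsi : b = s i' := hF0i hbW0 (hCW0 i' (by omega)) this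
                exact hcb (hbsi ▸ ⟨i', by simp only [Set.mem_setOf_eq]; omega, rfl⟩)
            · rw [hGnC a hca, hGC b hcb] at heq
              exfalso
              have haW0 : a ∈ W0 := by
                rcases ha with rfl | ha
                · exact absurd hsKC hca
                · exact ha
              obtain ⟨i, hi, rfl⟩ := hcb
              simp only [Set.mem_setOf_eq] at hi
              rcases Nat.eq_zero_or_pos i with rfl | hipos
              · have hz0s : s 0 = z0 := by rw [hs]; rfl
                refine hlJ0 ⟨a, haW0, ?_⟩
                rw [heq, hz0s, hz0]
              · obtain ⟨i', rfl⟩ : ∃ i', i = i' + 1 := ⟨i - 1, by omega⟩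
                have hch : F (s (i'+1)) = F0 (s i') := hchainEq i' (hmono (by omega) hKgood)
                have : F0 a = F0 (s i') := by rw [heq, hch]
                have hasi : a = s i' := hF0i haW0 (hCW0 i' (by omega)) this
                exact hca (hasi ▸ ⟨i', by simp only [Set.mem_setOf_eq]; omega, rfl⟩)
            · rw [hGnC a hca, hGnC b hcb] at heq
              have haW0 : a ∈ W0 := by
                rcases ha with rfl | ha
                · exact absurd hsKC hca
                · exact ha
              have hbW0 : b ∈ W0 := by
                rcases hb with rfl | hb
                · exact absurd hsKC hcb
                · exact hb
              exact hF0i haW0 hbW0 heq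
          · intro z hz
            by_cases hc : z ∈ C
            · rw [hGC z hc]; exact hFm z (hCW hc)
            · rw [hGnC z hc]
              have hzW0 : z ∈ W0 := by
                rcases hz with rfl | hz
                · exact absurd hsKC hc
                · exact hz
              exact hF0m z hzW0
        have := hW0.eq_of_subset_indep hindep (Set.subset_insert _ _)
        rw [← this] at hindep
        exact hKW0 (this ▸ Set.mem_insert _ _)



/-- A matroid `M` on a finite ground set is a strict gammoid iff its dual `M✶`
is a transversal matroid. -/
theorem stmt6 {E : Type*} [Fintype E] (M : Matroid E) (hE : M.E = Set.univ) :
    IsStrictGammoid M ↔ IsTransversalMatroid M✶ := by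
  classical
  constructor
  · rintro ⟨Adj, B, hM⟩
    haveI : Fintype ↥(Bᶜ) := Fintype.ofFinite _
    set m := Fintype.card ↥(Bᶜ) with hm
    set ee : ↥(Bᶜ) ≃ Fin m := Fintype.equivFin ↥(Bᶜ) with hee
    refine ⟨m + 1, fun j => if h : (j : ℕ) < m then
      {u | u = ↑(ee.symm ⟨j, h⟩) ∨ Adj ↑(ee.symm ⟨j, h⟩) u} else ∅, fun Y => ?_⟩
    set A : Fin (m+1) → Set E := fun j => if h : (j : ℕ) < m then
      {u | u = ↑(ee.symm ⟨j, h⟩) ∨ Adj ↑(ee.symm ⟨j, h⟩) u} else ∅ with hA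
    rw [Matroid.dual_indep_iff_exists']
    constructor
    · rintro ⟨hYE, Z, hZbase, hYZ⟩
      have hZlink : Linked Adj B Z := (hM Z).1 hZbase.indep
      obtain ⟨f, hfi, hfstep, hfav⟩ := linked_to_fun hZlink
      have hX0link : Linked Adj B ((f '' Bᶜ)ᶜ) :=
        fun_to_linked f hfi hfstep (fun v hv hmem => hmem (Set.mem_image_of_mem f hv))
      have hX0ind : M.Indep ((f '' Bᶜ)ᶜ) := (hM _).2 hX0link
      have hsub : Z ⊆ (f '' Bᶜ)ᶜ := by
        intro z hz hzim
        obtain ⟨v, hv, rfl⟩ := hzim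
        exact hfav v hv hz
      have hZeq : Z = (f '' Bᶜ)ᶜ := hZbase.eq_of_subset_indep hX0ind hsub
      have hYim : Y ⊆ f '' Bᶜ := by
        intro y hy
        by_contra hcon
        exact (Set.disjoint_left.1 hYZ) hy (hZeq ▸ hcon)
      refine ⟨fun y => if h : ∃ v, v ∈ Bᶜ ∧ f v = y then
        Fin.castSucc (ee ⟨h.choose, h.choose_spec.1⟩) else ⟨m, Nat.lt_succ_self m⟩,
        ?_, ?_⟩
      · intro y hy y' hy' heq
        have h1 : ∃ v, v ∈ Bᶜ ∧ f v = y := by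
          obtain ⟨v, hv, hfv⟩ := hYim hy; exact ⟨v, hv, hfv⟩
        have h2 : ∃ v, v ∈ Bᶜ ∧ f v = y' := by
          obtain ⟨v, hv, hfv⟩ := hYim hy'; exact ⟨v, hv, hfv⟩
        beta_reduce at heq
        rw [dif_pos h1, dif_pos h2] at heq
        have := ee.injective (Fin.castSucc_injective _ heq)
        have hveq : h1.choose = h2.choose := congrArg Subtype.val this
        rw [← h1.choose_spec.2, ← h2.choose_spec.2, hveq]
      · intro y hy
        have h1 : ∃ v, v ∈ Bᶜ ∧ f v = y := by
          obtain ⟨v, hv, hfv⟩ := hYim hy; exact ⟨v, hv, hfv⟩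
        beta_reduce
        rw [dif_pos h1]
        set vv : ↥(Bᶜ) := ⟨h1.choose, h1.choose_spec.1⟩ with hvv
        have hlt : ((Fin.castSucc (ee vv)) : ℕ) < m := (ee vv).2
        rw [hA]
        simp only [dif_pos hlt]
        have : ee.symm ⟨(Fin.castSucc (ee vv) : ℕ), hlt⟩ = vv := by
          have : (⟨(Fin.castSucc (ee vv) : ℕ), hlt⟩ : Fin m) = ee vv := by
            apply Fin.ext; rfl
          rw [this, Equiv.symm_apply_apply]
        rw [this]
        have hstep := hfstep h1.choose h1.choose_spec.1
        rw [h1.choose_spec.2] at hstep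
        rcases hstep with h | h
        · exact Or.inl h
        · exact Or.inr h
    · rintro ⟨FT, hFTi, hFTm⟩
      refine ⟨hE ▸ Set.subset_univ Y, ?_⟩
      have hlt : ∀ y ∈ Y, (FT y : ℕ) < m := by
        intro y hy
        by_contra hcon
        have := hFTm y hy
        rw [hA] at this
        simp only [dif_neg hcon] at this
        exact absurd this (Set.notMem_empty y)
      set gE : E → E := fun y => if h : (FT y : ℕ) < m then ↑(ee.symm ⟨FT y, h⟩) else y
        with hgE
      have hgmem : ∀ y ∈ Y, gE y ∈ Bᶜ ∧ (y = gE y ∨ Adj (gE y) y) := by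
        intro y hy
        have h := hlt y hy
        have hmem := hFTm y hy
        rw [hA] at hmem
        simp only [dif_pos h] at hmem
        rw [hgE]
        simp only [dif_pos h]
        exact ⟨(ee.symm ⟨FT y, h⟩).2, hmem⟩
      have hginj : Set.InjOn gE Y := by
        intro y hy y' hy' heq
        have h := hlt y hy
        have h' := hlt y' hy'
        rw [hgE] at heq
        simp only [dif_pos h, dif_pos h'] at heq
        have h2 := ee.symm.injective (Subtype.ext heq)
        rw [Fin.mk.injEq] at h2
        exact hFTi hy hy' (Fin.ext h2)
      obtain ⟨f, hfi, hfstep, hfcov⟩ := ext_full gE hgmem hginj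
      have hX0link : Linked Adj B ((f '' Bᶜ)ᶜ) :=
        fun_to_linked f hfi hfstep (fun v hv hmem => hmem (Set.mem_image_of_mem f hv))
      have hX0ind : M.Indep ((f '' Bᶜ)ᶜ) := (hM _).2 hX0link
      obtain ⟨Z, hZbase, hZsup⟩ := hX0ind.exists_isBase_superset
      have hZle : Z.ncard ≤ ((f '' Bᶜ)ᶜ).ncard := by
        obtain ⟨f2, hf2i, _, hf2av⟩ := linked_to_fun ((hM Z).1 hZbase.indep)
        have hZsub : Z ⊆ (f2 '' Bᶜ)ᶜ := by
          intro z hz hzim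
          obtain ⟨v, hv, rfl⟩ := hzim
          exact hf2av v hv hz
        have h1 : (f2 '' Bᶜ).ncard = (Bᶜ : Set E).ncard := Set.ncard_image_of_injOn hf2i
        have h2 : (f '' Bᶜ).ncard = (Bᶜ : Set E).ncard := Set.ncard_image_of_injOn hfi
        have h3 := Set.ncard_add_ncard_compl (f2 '' Bᶜ)
        have h4 := Set.ncard_add_ncard_compl (f '' Bᶜ)
        have h5 := Set.ncard_le_ncard hZsub (Set.toFinite _)
        omega
      have hZeq : (f '' Bᶜ)ᶜ = Z :=
        Set.eq_of_subset_of_ncard_le hZsup hZle (Set.toFinite _)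
      refine ⟨(f '' Bᶜ)ᶜ, hZeq ▸ hZbase, ?_⟩
      rw [Set.disjoint_left]
      intro y hy hyX0
      exact hyX0 (hfcov hy)
  · rintro ⟨n, A, hA⟩
    obtain ⟨W0, hW0⟩ := M✶.exists_isBase
    obtain ⟨F0, hF0i, hF0m⟩ := (hA W0).1 hW0.indep
    refine ⟨fun a b => a ∈ W0 ∧ b ∈ A (F0 a), W0ᶜ, fun X => ?_⟩
    constructor
    · intro hX
      rw [← Matroid.dual_dual M, Matroid.dual_indep_iff_exists'] at hX
      obtain ⟨hXE, W, hWbase, hXW⟩ := hX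
      obtain ⟨F, hFi, hFm⟩ := (hA W).1 hWbase.indep
      obtain ⟨F', hF'i, hF'm, hF'sub⟩ := reroute A M✶ hA hW0 F0 hF0i hF0m F hFi hFm
      have hcardW : W.ncard = W0.ncard := hWbase.ncard_eq_ncard_of_isBase hW0
      have h1 : (F' '' W).ncard = W.ncard := Set.ncard_image_of_injOn hF'i
      have h2 : (F0 '' W0).ncard = W0.ncard := Set.ncard_image_of_injOn hF0i
      have hFeq : F' '' W = F0 '' W0 :=
        Set.eq_of_subset_of_ncard_le hF'sub (by omega) (Set.toFinite _)
      have hex : ∀ w ∈ W0, ∃ z, z ∈ W ∧ F' z = F0 w := by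
        intro w hw
        have : F0 w ∈ F' '' W := hFeq ▸ Set.mem_image_of_mem F0 hw
        obtain ⟨z, hz, hzw⟩ := this
        exact ⟨z, hz, hzw⟩
      set f : E → E := fun w => if h : ∃ z, z ∈ W ∧ F' z = F0 w then h.choose else w
        with hf
      have hfspec : ∀ w ∈ W0, f w ∈ W ∧ F' (f w) = F0 w := by
        intro w hw
        have h := hex w hw
        rw [hf]
        simp only [dif_pos h]
        exact ⟨h.choose_spec.1, h.choose_spec.2⟩
      refine fun_to_linked f ?_ ?_ ?_
      · rw [compl_compl]
        intro w hw w' hw' heq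
        have h1 := hfspec w hw
        have h2 := hfspec w' hw'
        have : F0 w = F0 w' := by rw [← h1.2, ← h2.2, heq]
        exact hF0i hw hw' this
      · rw [compl_compl]
        intro w hw
        right
        exact ⟨hw, (hfspec w hw).2 ▸ hF'm _ (hfspec w hw).1⟩
      · rw [compl_compl]
        intro w hw
        exact Set.disjoint_right.1 hXW (hfspec w hw).1
    · intro hL
      obtain ⟨f, hfi, hfstep, hfav⟩ := linked_to_fun hL
      rw [compl_compl] at hfi hfstep hfav
      set W := f '' W0 with hW
      have hWex : ∀ y ∈ W, ∃ w, w ∈ W0 ∧ f w = y := by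
        rintro y ⟨w, hw, rfl⟩; exact ⟨w, hw, rfl⟩
      have hWtrans : PartialTransversal A W := by
        refine ⟨fun y => if h : ∃ w, w ∈ W0 ∧ f w = y then F0 h.choose else F0 y, ?_, ?_⟩
        · intro y hy y' hy' heq
          have h1 := hWex y hy
          have h2 := hWex y' hy'
          beta_reduce at heq
          rw [dif_pos h1, dif_pos h2] at heq
          have := hF0i h1.choose_spec.1 h2.choose_spec.1 heq
          rw [← h1.choose_spec.2, ← h2.choose_spec.2, this]
        · intro y hy
          have h1 := hWex y hy
          beta_reduce
          rw [dif_pos h1]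
          have hstep := hfstep h1.choose h1.choose_spec.1
          rw [h1.choose_spec.2] at hstep
          rcases hstep with h | h
          · rw [← h]; exact hF0m _ (h ▸ h1.choose_spec.1)
          · exact h.2
      have hWind : M✶.Indep W := (hA W).2 hWtrans
      obtain ⟨Z, hZbase, hZsup⟩ := hWind.exists_isBase_superset
      have hcard1 : Z.ncard = W0.ncard := hZbase.ncard_eq_ncard_of_isBase hW0
      have hcard2 : W.ncard = W0.ncard := Set.ncard_image_of_injOn hfi
      have hWeq : W = Z := Set.eq_of_subset_of_ncard_le hZsup (by omega) (Set.toFinite _)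
      rw [← Matroid.dual_dual M, Matroid.dual_indep_iff_exists']
      refine ⟨by rw [Matroid.dual_ground, hE]; exact Set.subset_univ X, W, hWeq ▸ hZbase, ?_⟩
      rw [Set.disjoint_right]
      rintro y ⟨w, hw, rfl⟩
      exact hfav w hw
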